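/- The only critical points of the spherical pendulum Hamiltonian H restricted to T*S² are the two equilibria (q, p) = ((0,0,−1), 0) and (q, p) = ((0,0,1), 0). Precisely: a point (q, p) with ‖q‖ = 1 and ⟨q, p⟩ = 0 satisfies v₃ + ⟨p, w⟩ = 0 for every (v, w) ∈ ℝ³ × ℝ³ tangent to T*S² at (q, p) (that is, every (v, w) with ⟨q, v⟩ = 0 and ⟨p, v⟩ + ⟨q, w⟩ = 0) if and only if p = 0 and q = (0,0,1) or q = (0,0,−1). At these points H takes the values 1 and −1, respectively. -/

import Mathlib

noncomputable section

/-- The spherical pendulum Hamiltonian H(q, p) = (1/2)‖p‖² + q₃. -/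
def Hsp (q p : EuclideanSpace ℝ (Fin 3)) : ℝ := (1 / 2) * ‖p‖ ^ 2 + q 2

/-- The north and south poles (0,0,1) and (0,0,-1). -/
def north : EuclideanSpace ℝ (Fin 3) := EuclideanSpace.single 2 (1 : ℝ)

/-- The only critical points of H restricted to T*S² are the equilibria
((0,0,-1), 0) and ((0,0,1), 0): for (q, p) with ‖q‖ = 1 and ⟨q, p⟩ = 0,
the differential of H vanishes on all tangent vectors to T*S² at (q, p)
iff p = 0 and q = ±(0,0,1).  At these points H equals 1 resp. -1. -/
theorem spherical_pendulum_critical_points :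
    (∀ q p : EuclideanSpace ℝ (Fin 3), ‖q‖ = 1 → (inner ℝ q p : ℝ) = 0 →
      ((∀ v w : EuclideanSpace ℝ (Fin 3),
          (inner ℝ q v : ℝ) = 0 → (inner ℝ p v : ℝ) + (inner ℝ q w : ℝ) = 0 →
          v 2 + (inner ℝ p w : ℝ) = 0)
        ↔ (p = 0 ∧ (q = north ∨ q = -north)))) ∧
    Hsp north 0 = 1 ∧ Hsp (-north) 0 = -1 := by
  have hn2 : (north : EuclideanSpace ℝ (Fin 3)) 2 = 1 := by
    simp [north, EuclideanSpace.single_apply]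
  refine ⟨?_, ?_, ?_⟩
  · intro q p hq hqp
    have hqq : (inner ℝ q q : ℝ) = 1 := by
      rw [real_inner_self_eq_norm_sq, hq]; norm_num
    constructor
    · intro h
      -- first: p = 0
      have hpq : (inner ℝ p q : ℝ) = 0 := by rw [real_inner_comm]; exact hqp
      have hp0 : p = 0 := by
        have h1 := h 0 p (by simp) (by simp [hqp])
        simp at h1
        have : (inner ℝ p p : ℝ) = 0 := by simpa using h1
        exact inner_self_eq_zero.mp this
      subst hp0
      -- now: e₂ - (q 2) • q is tangent
      set e2 : EuclideanSpace ℝ (Fin 3) := EuclideanSpace.single 2 (1 : ℝ) with he2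
      have hqe2 : (inner ℝ q e2 : ℝ) = q 2 := by
        simp [he2, EuclideanSpace.inner_single_right]
      have h2 := h (e2 - (q 2) • q) 0
        (by rw [inner_sub_right, inner_smul_right, hqe2, hqq]; ring)
        (by simp)
      simp only [inner_zero_left, inner_zero_right, add_zero, zero_add] at h2
      have hv2 : (e2 - (q 2) • q) 2 = 1 - q 2 * q 2 := by
        simp [he2, EuclideanSpace.single_apply]
        try ring
      rw [hv2] at h2
      have hsq : q 2 * q 2 = 1 := by linarith
      have hsum : q 0 * q 0 + q 1 * q 1 + q 2 * q 2 = 1 := by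
        have := hqq
        rw [PiLp.inner_apply] at this
        simpa [Fin.sum_univ_three, ← sq] using this
      have h0 : q 0 = 0 := by nlinarith [sq_nonneg (q 0), sq_nonneg (q 1)]
      have h1 : q 1 = 0 := by nlinarith [sq_nonneg (q 0), sq_nonneg (q 1)]
      refine ⟨rfl, ?_⟩
      have : q 2 = 1 ∨ q 2 = -1 := by
        rcases mul_self_eq_one_iff.mp hsq with h | h
        · exact Or.inl h
        · exact Or.inr h
      rcases this with h | h
      · left
        ext i
        fin_cases i <;> simp [north, EuclideanSpace.single_apply, h0, h1, h]
      · right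
        ext i
        fin_cases i <;> simp [north, EuclideanSpace.single_apply, h0, h1, h]
    · rintro ⟨rfl, hq | hq⟩ <;> subst hq <;> intro v w hv hw <;>
        simp only [inner_zero_left, inner_zero_right, add_zero, zero_add] at *
      · have : (inner ℝ north v : ℝ) = v 2 := by
          simp [north, EuclideanSpace.inner_single_left]
        rw [this] at hv; simpa using hv
      · have : (inner ℝ (-north) v : ℝ) = -(v 2) := by
          simp [north, EuclideanSpace.inner_single_left]
        rw [this] at hv; simpa using hv.symm
  · simp [Hsp, hn2]
  · simp [Hsp, hn2]
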